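/- arXiv:2201.00338 — 3 statements merged into one kernel-verified Lean document; each statement's English description precedes it below -/
import Mathlib

section
/- Let H, Y be real Hilbert spaces, (φ_λ)_{λ∈Λ} an orthonormal basis of H over a countable index set Λ, (κ_λ)_{λ∈Λ} weights with κ_λ ≥ a > 0, and A : H → Y a bounded linear operator. Let h⋆ ∈ H be sparse, η ∈ ∂‖h⋆‖_{1,κ}, and assume the restriction A_{Ω[η]} of A to H_{Ω[η]} := span{φ_λ : λ ∈ Ω[η]} is injective, where Ω[η] := {λ : |⟨φ_λ, η⟩| = κ_λ}. Then for all h ∈ H: ‖h − h⋆‖ ≤ ‖A_{Ω[η]}⁻¹‖ · ‖A h − A h⋆‖ + ((1 + ‖A_{Ω[η]}⁻¹‖ · ‖A‖)/m[η]) · D_η^{‖·‖_{1,κ}}(h, h⋆), where m[η] := inf{κ_λ − |⟨φ_λ, η⟩| : λ ∉ Ω[η]}. -/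
open scoped ENNReal InnerProductSpace

noncomputable section

/-- `ξ` is a subgradient of the extended-real-valued functional `Q` at `xs`. -/
def IsSubgrad {X : Type*} [NormedAddCommGroup X] [InnerProductSpace ℝ X]
    (Q : X → ℝ≥0∞) (xs ξ : X) : Prop :=
  ∀ x, (Q xs : EReal) + ((⟪ξ, x - xs⟫_ℝ : ℝ) : EReal) ≤ (Q x : EReal)

/-- The Bregman distance `D_ξ^Q(x, xs) := Q(x) - Q(xs) - ⟪ξ, x - xs⟫`. -/
def Breg {X : Type*} [NormedAddCommGroup X] [InnerProductSpace ℝ X]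
    (Q : X → ℝ≥0∞) (ξ xs x : X) : EReal :=
  (Q x : EReal) - (Q xs : EReal) - ((⟪ξ, x - xs⟫_ℝ : ℝ) : EReal)

/-- The weighted ℓ¹-norm `‖h‖_{1,κ} = Σ_λ κ_λ |⟪φ_λ, h⟫|`. -/
def WNorm1 {H : Type*} [NormedAddCommGroup H] [InnerProductSpace ℝ H] {Λ : Type*}
    (φ : HilbertBasis Λ ℝ H) (κ : Λ → ℝ) (h : H) : ℝ≥0∞ :=
  ∑' l, ENNReal.ofReal (κ l * |⟪φ l, h⟫_ℝ|)

section Aux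

lemma ennreal_coe_ereal_eq (x : ℝ≥0∞) (hx : x ≠ ⊤) :
    (x : EReal) = ((x.toReal : ℝ) : EReal) := by
  conv_lhs => rw [← ENNReal.ofReal_toReal hx]
  rw [EReal.coe_ennreal_ofReal, max_eq_left ENNReal.toReal_nonneg]

variable {H : Type*} [NormedAddCommGroup H] [InnerProductSpace ℝ H] [CompleteSpace H]
variable {Λ : Type*} (φ : HilbertBasis Λ ℝ H) (κ : Λ → ℝ)

lemma wnorm_ne_top (g : H) (hg : {l : Λ | ⟪φ l, g⟫_ℝ ≠ 0}.Finite) :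
    WNorm1 φ κ g ≠ ⊤ := by
  classical
  rw [WNorm1, tsum_eq_sum (s := hg.toFinset) (fun b hb => ?_)]
  · exact (ENNReal.sum_lt_top.mpr fun _ _ => ENNReal.ofReal_lt_top).ne
  · simp only [Set.Finite.mem_toFinset, Set.mem_setOf_eq, not_not] at hb
    rw [hb]
    simp

lemma wnorm_toReal (hκ0 : ∀ l, 0 ≤ κ l) (g : H) (hg : WNorm1 φ κ g ≠ ⊤) :
    Summable (fun l => κ l * |⟪φ l, g⟫_ℝ|) ∧
      WNorm1 φ κ g = ENNReal.ofReal (∑' l, κ l * |⟪φ l, g⟫_ℝ|) := by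
  rw [WNorm1] at hg
  have h1 := ENNReal.summable_toReal hg
  have heq : (fun l => (ENNReal.ofReal (κ l * |⟪φ l, g⟫_ℝ|)).toReal)
      = fun l => κ l * |⟪φ l, g⟫_ℝ| :=
    funext fun l => ENNReal.toReal_ofReal (mul_nonneg (hκ0 l) (abs_nonneg _))
  rw [heq] at h1
  refine ⟨h1, ?_⟩
  rw [WNorm1, ENNReal.ofReal_tsum_of_nonneg (fun l => mul_nonneg (hκ0 l) (abs_nonneg _)) h1]

lemma key_ineq (hκ0 : ∀ l, 0 ≤ κ l) (hstar η : H)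
    (hsub : IsSubgrad (WNorm1 φ κ) hstar η)
    (hfin : WNorm1 φ κ hstar ≠ ⊤) (l : Λ) (s : ℝ) :
    κ l * |⟪φ l, hstar⟫_ℝ| + (s - ⟪φ l, hstar⟫_ℝ) * ⟪φ l, η⟫_ℝ ≤ κ l * |s| := by
  classical
  set c : ℝ := s - ⟪φ l, hstar⟫_ℝ with hc
  set x : H := hstar + c • φ l with hx
  have horth : ∀ m, ⟪φ m, φ l⟫_ℝ = if m = l then 1 else 0 :=
    fun m => orthonormal_iff_ite.mp φ.orthonormal m l
  have hcoef : ∀ m, ⟪φ m, x⟫_ℝ = if m = l then s else ⟪φ m, hstar⟫_ℝ := by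
    intro m
    rw [hx, inner_add_right, real_inner_smul_right, horth m]
    by_cases hm : m = l
    · subst hm; simp [hc]
    · simp [hm]
  set T : ℝ≥0∞ := ∑' m, if m = l then 0 else ENNReal.ofReal (κ m * |⟪φ m, hstar⟫_ℝ|) with hT
  have hQs : WNorm1 φ κ hstar = ENNReal.ofReal (κ l * |⟪φ l, hstar⟫_ℝ|) + T :=
    ENNReal.tsum_eq_add_tsum_ite l
  have hQx : WNorm1 φ κ x = ENNReal.ofReal (κ l * |s|) + T := by
    rw [WNorm1, ENNReal.tsum_eq_add_tsum_ite l, hcoef l, if_pos rfl]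
    congr 1
    refine tsum_congr fun m => ?_
    by_cases hm : m = l
    · simp [hm]
    · simp [hm, hcoef m]
  have hTne : T ≠ ⊤ := fun hTop => hfin (by rw [hQs, hTop]; simp)
  have hinner : ⟪η, x - hstar⟫_ℝ = c * ⟪φ l, η⟫_ℝ := by
    rw [hx, add_sub_cancel_left, real_inner_smul_right, real_inner_comm]
  have hTcoe : ((T : ℝ≥0∞) : EReal) = ((T.toReal : ℝ) : EReal) := ennreal_coe_ereal_eq T hTne
  have hconv : ∀ u : ℝ, 0 ≤ u →
      ((ENNReal.ofReal u + T : ℝ≥0∞) : EReal) = ((u + T.toReal : ℝ) : EReal) := by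
    intro u hu
    rw [EReal.coe_ennreal_add, EReal.coe_ennreal_ofReal, max_eq_left hu, hTcoe, ← EReal.coe_add]
  have hmain := hsub x
  rw [hQs, hQx, hinner, hconv _ (mul_nonneg (hκ0 l) (abs_nonneg _)),
    hconv _ (mul_nonneg (hκ0 l) (abs_nonneg _)), ← EReal.coe_add, EReal.coe_le_coe_iff] at hmain
  linarith

lemma span_closure_bound {Y : Type*} [NormedAddCommGroup Y] [InnerProductSpace ℝ Y]
    (A : H →L[ℝ] Y) (Ω : Set Λ) (K : ℝ)
    (hKinv : ∀ g ∈ (Submodule.span ℝ ((fun l => φ l) '' Ω) : Set H), ‖g‖ ≤ K * ‖A g‖)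
    (g : H) (hg : ∀ l, l ∉ Ω → ⟪φ l, g⟫_ℝ = 0) : ‖g‖ ≤ K * ‖A g‖ := by
  classical
  set V := Submodule.span ℝ ((fun l => φ l) '' Ω) with hV
  have hmem : g ∈ closure (V : Set H) := by
    have hrepr : HasSum (fun i => φ.repr g i • φ i) g := φ.hasSum_repr g
    refine mem_closure_of_tendsto hrepr (Filter.Eventually.of_forall fun s => ?_)
    refine Submodule.sum_mem _ fun i _ => ?_
    by_cases hi : i ∈ Ω
    · exact Submodule.smul_mem _ _ (Submodule.subset_span ⟨i, hi, rfl⟩)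
    · have h0 : φ.repr g i = 0 := by rw [φ.repr_apply_apply]; exact hg i hi
      rw [h0, zero_smul]
      exact Submodule.zero_mem _
  have hclosed : IsClosed {z : H | ‖z‖ ≤ K * ‖A z‖} :=
    isClosed_le continuous_norm (continuous_const.mul A.continuous.norm)
  exact closure_minimal (fun z hz => hKinv z hz) hclosed hmem

end Aux

/-- **Norm bound via the ℓ¹ Bregman distance (Lemma `normbound2`).**
For sparse `hstar`, `η ∈ ∂‖hstar‖_{1,κ}` with `A` injective on
`H_{Ω[η]} = span {φ_λ : |⟪φ_λ, η⟫| = κ_λ}` and `K ≥ 0` a bound for the inverse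
of the restriction `A_{Ω[η]}` (the operator norm `‖A_{Ω[η]}⁻¹‖` is the least
such `K`), one has for all `h ∈ H`
`‖h - hstar‖ ≤ K ‖A h - A hstar‖ + ((1 + K‖A‖)/m[η]) D_η(h, hstar)`. -/
theorem normbound_bregman
    {H Y : Type*} [NormedAddCommGroup H] [InnerProductSpace ℝ H] [CompleteSpace H]
    [NormedAddCommGroup Y] [InnerProductSpace ℝ Y] [CompleteSpace Y]
    {Λ : Type*} [Countable Λ] (φ : HilbertBasis Λ ℝ H)
    (κ : Λ → ℝ) (a : ℝ) (ha : 0 < a) (hκ : ∀ l, a ≤ κ l)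
    (A : H →L[ℝ] Y)
    (hstar : H) (hsparse : {l : Λ | ⟪φ l, hstar⟫_ℝ ≠ 0}.Finite)
    (η : H) (hsub : IsSubgrad (WNorm1 φ κ) hstar η)
    (hinj : Set.InjOn A
      (Submodule.span ℝ ((fun l => φ l) '' {l : Λ | |⟪φ l, η⟫_ℝ| = κ l}) : Set H))
    (K : ℝ) (hK0 : 0 ≤ K)
    (hKinv : ∀ g ∈
      (Submodule.span ℝ ((fun l => φ l) '' {l : Λ | |⟪φ l, η⟫_ℝ| = κ l}) : Set H),
      ‖g‖ ≤ K * ‖A g‖)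
    (h : H) :
    ((‖h - hstar‖ : ℝ) : EReal) ≤
      ((K * ‖A h - A hstar‖ : ℝ) : EReal) +
        (((1 + K * ‖A‖) /
            sInf ((fun l => κ l - |⟪φ l, η⟫_ℝ|) '' {l : Λ | |⟪φ l, η⟫_ℝ| ≠ κ l}) : ℝ) : EReal) *
          Breg (WNorm1 φ κ) η hstar h := by
  classical
  have hκ0 : ∀ l, 0 ≤ κ l := fun l => ha.le.trans (hκ l)
  have hQs_ne : WNorm1 φ κ hstar ≠ ⊤ := wnorm_ne_top φ κ hstar hsparse
  have hkey := key_ineq φ κ hκ0 hstar η hsub hQs_ne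
  -- subgradient consequences
  have hetale : ∀ l, |⟪φ l, η⟫_ℝ| ≤ κ l := by
    intro l
    by_contra hlt
    push_neg at hlt
    set e := ⟪φ l, η⟫_ℝ with he
    set b := ⟪φ l, hstar⟫_ℝ with hb
    have hepos : 0 < |e| := lt_of_le_of_lt (hκ0 l) hlt
    have hd : 0 < |e| * (|e| - κ l) := mul_pos hepos (by linarith)
    set t := (|κ l * |b| - b * e| + 1) / (|e| * (|e| - κ l)) with ht_def
    have ht : 0 ≤ t := div_nonneg (by positivity) hd.le
    have h1 := hkey l (t * e)
    rw [abs_mul, abs_of_nonneg ht] at h1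
    have hcancel : t * (|e| * (|e| - κ l)) = |κ l * |b| - b * e| + 1 :=
      div_mul_cancel₀ _ hd.ne'
    have he2 : e * e = |e| * |e| := (abs_mul_abs_self e).symm
    nlinarith [le_abs_self (κ l * |b| - b * e), neg_abs_le (κ l * |b| - b * e)]
  have heq4 : ∀ l, ⟪φ l, η⟫_ℝ * ⟪φ l, hstar⟫_ℝ = κ l * |⟪φ l, hstar⟫_ℝ| := by
    intro l
    have h0 := hkey l 0
    rw [abs_zero, mul_zero] at h0
    have h1 : ⟪φ l, η⟫_ℝ * ⟪φ l, hstar⟫_ℝ ≤ |⟪φ l, η⟫_ℝ| * |⟪φ l, hstar⟫_ℝ| := by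
      calc ⟪φ l, η⟫_ℝ * ⟪φ l, hstar⟫_ℝ ≤ |⟪φ l, η⟫_ℝ * ⟪φ l, hstar⟫_ℝ| := le_abs_self _
      _ = |⟪φ l, η⟫_ℝ| * |⟪φ l, hstar⟫_ℝ| := abs_mul _ _
    have h2 : |⟪φ l, η⟫_ℝ| * |⟪φ l, hstar⟫_ℝ| ≤ κ l * |⟪φ l, hstar⟫_ℝ| :=
      mul_le_mul_of_nonneg_right (hetale l) (abs_nonneg _)
    nlinarith
  have hsupp : ∀ l, ⟪φ l, hstar⟫_ℝ ≠ 0 → |⟪φ l, η⟫_ℝ| = κ l := by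
    intro l hne
    refine le_antisymm (hetale l) ?_
    have hbpos : 0 < |⟪φ l, hstar⟫_ℝ| := abs_pos.mpr hne
    have h1 : κ l * |⟪φ l, hstar⟫_ℝ| ≤ |⟪φ l, η⟫_ℝ| * |⟪φ l, hstar⟫_ℝ| := by
      rw [← heq4 l]
      calc ⟪φ l, η⟫_ℝ * ⟪φ l, hstar⟫_ℝ ≤ |⟪φ l, η⟫_ℝ * ⟪φ l, hstar⟫_ℝ| := le_abs_self _
      _ = |⟪φ l, η⟫_ℝ| * |⟪φ l, hstar⟫_ℝ| := abs_mul _ _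
    exact le_of_mul_le_mul_right h1 hbpos
  set Ω : Set Λ := {l : Λ | |⟪φ l, η⟫_ℝ| = κ l} with hΩdef
  set N : Set Λ := {l : Λ | |⟪φ l, η⟫_ℝ| ≠ κ l} with hNdef
  set S : Set ℝ := (fun l => κ l - |⟪φ l, η⟫_ℝ|) '' N with hSdef
  have hbound := span_closure_bound φ A Ω K hKinv
  by_cases hcase : ∀ l : Λ, |⟪φ l, η⟫_ℝ| = κ l
  · -- N is empty
    have hNe : N = ∅ := Set.eq_empty_iff_forall_notMem.mpr fun l hl => hl (hcase l)
    have hSe : S = ∅ := by rw [hSdef, hNe, Set.image_empty]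
    rw [hSe, Real.sInf_empty, div_zero, EReal.coe_zero, zero_mul, add_zero,
      EReal.coe_le_coe_iff]
    have := hbound (h - hstar) (fun l hl => absurd (hcase l) hl)
    rwa [map_sub] at this
  · push_neg at hcase
    obtain ⟨l0, hl0⟩ := hcase
    have hSne : S.Nonempty := ⟨_, ⟨l0, hl0, rfl⟩⟩
    -- positivity of the infimum
    have hsum2 : Summable (fun l => ⟪φ l, η⟫_ℝ * ⟪φ l, η⟫_ℝ) := by
      refine (φ.hasSum_inner_mul_inner η η).summable.congr fun i => ?_
      rw [real_inner_comm]
    have hev := hsum2.tendsto_cofinite_zero.eventually_lt_const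
      (show (0:ℝ) < (a/2) * (a/2) by positivity)
    have hfinbig : {l : Λ | a/2 ≤ |⟪φ l, η⟫_ℝ|}.Finite := by
      refine (Filter.eventually_cofinite.mp hev).subset fun l hl => ?_
      simp only [Set.mem_setOf_eq] at hl ⊢
      intro hcon
      nlinarith [abs_mul_abs_self ⟪φ l, η⟫_ℝ]
    set T0 : Finset Λ := hfinbig.toFinset.filter (fun l => |⟪φ l, η⟫_ℝ| ≠ κ l) with hT0
    set F : Finset ℝ := insert (a/2) (T0.image fun l => κ l - |⟪φ l, η⟫_ℝ|) with hF
    have hFne : F.Nonempty := Finset.insert_nonempty _ _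
    set c0 : ℝ := F.min' hFne with hc0
    have hc0pos : 0 < c0 := by
      rw [hc0, Finset.lt_min'_iff]
      intro x hx
      rw [hF, Finset.mem_insert] at hx
      rcases hx with rfl | hx
      · positivity
      · obtain ⟨l, hl, rfl⟩ := Finset.mem_image.mp hx
        rw [hT0, Finset.mem_filter] at hl
        exact sub_pos.mpr (lt_of_le_of_ne (hetale l) hl.2)
    have hlb : ∀ x ∈ S, c0 ≤ x := by
      rintro x ⟨l, hl, rfl⟩
      by_cases hbig : a/2 ≤ |⟪φ l, η⟫_ℝ|
      · refine Finset.min'_le _ _ ?_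
        rw [hF]
        refine Finset.mem_insert_of_mem (Finset.mem_image_of_mem _ ?_)
        rw [hT0, Finset.mem_filter]
        exact ⟨hfinbig.mem_toFinset.mpr hbig, hl⟩
      · push_neg at hbig
        have h1 : c0 ≤ a/2 := Finset.min'_le _ _ (Finset.mem_insert_self _ _)
        have h2 := hκ l
        simp only
        linarith
    set m' : ℝ := sInf S with hm'def
    have hm'ge : c0 ≤ m' := le_csInf hSne hlb
    have hm'pos : 0 < m' := lt_of_lt_of_le hc0pos hm'ge
    have hbdd : BddBelow S := ⟨c0, hlb⟩
    have hm'le : ∀ l ∈ N, m' ≤ κ l - |⟪φ l, η⟫_ℝ| := fun l hl => csInf_le hbdd ⟨l, hl, rfl⟩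
    by_cases hQh : WNorm1 φ κ h = ⊤
    · -- infinite Bregman distance: the bound is trivial
      have hBtop : Breg (WNorm1 φ κ) η hstar h = ⊤ := by
        rw [Breg, hQh, EReal.coe_ennreal_top, ennreal_coe_ereal_eq _ hQs_ne,
          EReal.top_sub_coe, EReal.top_sub_coe]
      rw [hBtop]
      have hcoefpos : (0:ℝ) < (1 + K * ‖A‖) / m' :=
        div_pos (by positivity) hm'pos
      rw [EReal.coe_mul_top_of_pos hcoefpos, EReal.coe_add_top]
      exact le_top
    · -- finite case: the real estimate
      obtain ⟨sumh, hWh⟩ := wnorm_toReal φ κ hκ0 h hQh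
      obtain ⟨sums, hWs⟩ := wnorm_toReal φ κ hκ0 hstar hQs_ne
      have hinnersum : HasSum (fun l => ⟪φ l, η⟫_ℝ * (⟪φ l, h⟫_ℝ - ⟪φ l, hstar⟫_ℝ))
          ⟪η, h - hstar⟫_ℝ := by
        have heqf : (fun l => ⟪φ l, η⟫_ℝ * (⟪φ l, h⟫_ℝ - ⟪φ l, hstar⟫_ℝ))
            = fun i => ⟪η, φ i⟫_ℝ * ⟪φ i, h - hstar⟫_ℝ :=
          funext fun i => by rw [real_inner_comm (φ i) η, inner_sub_right]
        rw [heqf]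
        exact φ.hasSum_inner_mul_inner η (h - hstar)
      set t : Λ → ℝ := fun l => κ l * |⟪φ l, h⟫_ℝ| - κ l * |⟪φ l, hstar⟫_ℝ|
        - ⟪φ l, η⟫_ℝ * (⟪φ l, h⟫_ℝ - ⟪φ l, hstar⟫_ℝ) with ht_def
      have sumt : Summable t := (sumh.sub sums).sub hinnersum.summable
      set Dr : ℝ := ∑' l, t l with hDr_def
      have hDreq : Dr = (∑' l, κ l * |⟪φ l, h⟫_ℝ|) - (∑' l, κ l * |⟪φ l, hstar⟫_ℝ|)
          - ⟪η, h - hstar⟫_ℝ := by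
        rw [hDr_def, ht_def, Summable.tsum_sub (sumh.sub sums) hinnersum.summable,
          Summable.tsum_sub sumh sums, hinnersum.tsum_eq]
      have hBreg : Breg (WNorm1 φ κ) η hstar h = ((Dr : ℝ) : EReal) := by
        rw [Breg, hWh, hWs, EReal.coe_ennreal_ofReal, EReal.coe_ennreal_ofReal,
          max_eq_left (tsum_nonneg fun l => mul_nonneg (hκ0 l) (abs_nonneg _)),
          max_eq_left (tsum_nonneg fun l => mul_nonneg (hκ0 l) (abs_nonneg _)),
          ← EReal.coe_sub, ← EReal.coe_sub, hDreq]
      have ht_eq : ∀ l, t l = κ l * |⟪φ l, h⟫_ℝ| - ⟪φ l, η⟫_ℝ * ⟪φ l, h⟫_ℝ := by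
        intro l
        have h4 := heq4 l
        simp only [ht_def]
        ring_nf
        ring_nf at h4
        linarith
      have hprod : ∀ l, ⟪φ l, η⟫_ℝ * ⟪φ l, h⟫_ℝ ≤ |⟪φ l, η⟫_ℝ| * |⟪φ l, h⟫_ℝ| := by
        intro l
        calc ⟪φ l, η⟫_ℝ * ⟪φ l, h⟫_ℝ ≤ |⟪φ l, η⟫_ℝ * ⟪φ l, h⟫_ℝ| := le_abs_self _
        _ = |⟪φ l, η⟫_ℝ| * |⟪φ l, h⟫_ℝ| := abs_mul _ _
      have ht_nonneg : ∀ l, 0 ≤ t l := by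
        intro l
        rw [ht_eq l]
        have h2 : |⟪φ l, η⟫_ℝ| * |⟪φ l, h⟫_ℝ| ≤ κ l * |⟪φ l, h⟫_ℝ| :=
          mul_le_mul_of_nonneg_right (hetale l) (abs_nonneg _)
        linarith [hprod l]
      set f : Λ → ℝ := fun l => if l ∈ N then |⟪φ l, h - hstar⟫_ℝ| else 0 with hf_def
      have hstarN : ∀ l ∈ N, ⟪φ l, hstar⟫_ℝ = 0 := by
        intro l hl
        by_contra hne
        exact hl (hsupp l hne)
      have hfle : ∀ l, m' * f l ≤ t l := by
        intro l
        by_cases hl : l ∈ N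
        · simp only [hf_def, if_pos hl]
          rw [ht_eq l, inner_sub_right, hstarN l hl, sub_zero]
          have h2 := hm'le l hl
          nlinarith [hprod l, abs_nonneg ⟪φ l, h⟫_ℝ]
        · simp only [hf_def, if_neg hl, mul_zero]
          exact ht_nonneg l
      have hf_nonneg : ∀ l, 0 ≤ f l := by
        intro l
        simp only [hf_def]
        split
        · exact abs_nonneg _
        · exact le_refl 0
      have sum_mf : Summable (fun l => m' * f l) :=
        Summable.of_nonneg_of_le (fun l => mul_nonneg hm'pos.le (hf_nonneg l)) hfle sumt
      have sumf : Summable f := by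
        refine (sum_mf.mul_left m'⁻¹).congr fun l => ?_
        exact inv_mul_cancel_left₀ hm'pos.ne' (f l)
      have htsum_f : m' * (∑' l, f l) ≤ Dr := by
        rw [hDr_def, ← tsum_mul_left]
        exact Summable.tsum_le_tsum hfle sum_mf sumt
      -- splitting h - hstar
      set g0 : Λ → ℝ := fun l => if l ∈ N then ⟪φ l, h - hstar⟫_ℝ else 0 with hg0_def
      set w : Λ → H := fun l => g0 l • φ l with hw_def
      have hnormw : ∀ l, ‖w l‖ = f l := by
        intro l
        simp only [hw_def, hg0_def, hf_def, norm_smul, Real.norm_eq_abs,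
          φ.orthonormal.1 l, mul_one]
        by_cases hl : l ∈ N <;> simp [hl]
      have sum_normw : Summable (fun l => ‖w l‖) := by
        rw [funext hnormw]
        exact sumf
      have sumw : Summable w := Summable.of_norm sum_normw
      set v : H := ∑' l, w l with hv_def
      have hvnorm : ‖v‖ ≤ ∑' l, f l := by
        have h1 := norm_tsum_le_tsum_norm sum_normw
        rwa [funext hnormw] at h1
      have hvcoef : ∀ m : Λ, ⟪φ m, v⟫_ℝ = g0 m := by
        intro m
        have hmap := ContinuousLinearMap.map_tsum (innerSL ℝ (φ m)) sumw
        have hterm : ∀ l, ⟪φ m, w l⟫_ℝ = if l = m then g0 m else 0 := by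
          intro l
          simp only [hw_def]
          rw [real_inner_smul_right, orthonormal_iff_ite.mp φ.orthonormal m l]
          by_cases hlm : l = m
          · subst hlm; simp
          · simp [hlm, Ne.symm hlm]
        calc ⟪φ m, v⟫_ℝ = ∑' l, ⟪φ m, w l⟫_ℝ := hmap
        _ = ∑' l, (if l = m then g0 m else 0) := tsum_congr hterm
        _ = g0 m := tsum_ite_eq m (fun _ => g0 m)
      set u : H := (h - hstar) - v with hu_def
      have hucoef : ∀ l, l ∉ Ω → ⟪φ l, u⟫_ℝ = 0 := by
        intro l hl
        have hlN : l ∈ N := hl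
        rw [hu_def, inner_sub_right, hvcoef l]
        simp only [hg0_def, if_pos hlN, sub_self]
      have hub : ‖u‖ ≤ K * ‖A u‖ := hbound u hucoef
      have hAu : ‖A u‖ ≤ ‖A h - A hstar‖ + ‖A‖ * ‖v‖ := by
        rw [hu_def]
        calc ‖A ((h - hstar) - v)‖ = ‖(A h - A hstar) - A v‖ := by rw [map_sub, map_sub]
        _ ≤ ‖A h - A hstar‖ + ‖A v‖ := norm_sub_le _ _
        _ ≤ ‖A h - A hstar‖ + ‖A‖ * ‖v‖ := add_le_add (le_refl _) (A.le_opNorm v)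
      have hev' : ‖h - hstar‖ ≤ ‖u‖ + ‖v‖ := by
        have heuv : h - hstar = u + v := by rw [hu_def, sub_add_cancel]
        rw [heuv]
        exact norm_add_le u v
      have hfsum_le : (∑' l, f l) ≤ Dr / m' := by
        rw [le_div_iff₀ hm'pos]
        linarith [htsum_f]
      have hreal : ‖h - hstar‖ ≤ K * ‖A h - A hstar‖ + ((1 + K * ‖A‖) / m') * Dr := by
        have h1 : ‖v‖ ≤ Dr / m' := hvnorm.trans hfsum_le
        have h2 : ‖u‖ ≤ K * ‖A h - A hstar‖ + K * (‖A‖ * ‖v‖) := by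
          have h5 := mul_le_mul_of_nonneg_left hAu hK0
          have h6 : K * (‖A h - A hstar‖ + ‖A‖ * ‖v‖)
              = K * ‖A h - A hstar‖ + K * (‖A‖ * ‖v‖) := by ring
          linarith
        have hKA : (0:ℝ) ≤ 1 + K * ‖A‖ := by positivity
        have h3 : (1 + K * ‖A‖) * ‖v‖ ≤ (1 + K * ‖A‖) * (Dr / m') :=
          mul_le_mul_of_nonneg_left h1 hKA
        have h4 : ((1 + K * ‖A‖) / m') * Dr = (1 + K * ‖A‖) * (Dr / m') := by ring
        have h5 : (1 + K * ‖A‖) * ‖v‖ = ‖v‖ + K * (‖A‖ * ‖v‖) := by ring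
        linarith
      rw [hBreg, ← EReal.coe_mul, ← EReal.coe_add, EReal.coe_le_coe_iff]
      exact hreal
end
end

section
/- Let X, H, Y be separable real Hilbert spaces, W : X → H and A : H → Y bounded linear, R : X → [0,∞] proper, convex and weakly lower semicontinuous, (φ_λ)_{λ∈Λ} an orthonormal basis of H with countable Λ, and weights κ_λ ≥ a > 0. Suppose (x⋆, y⋆) satisfies A W x⋆ = y⋆, there exists ν ∈ Y with W*A*ν ∈ ∂(R + ‖W·‖_{1,κ})(x⋆), and there exist ξ ∈ ∂R(x⋆) and η ∈ ∂‖W x⋆‖_{1,κ} with W*A*ν = ξ + W*η, and the restriction of A to H_{Ω[η]} := span{φ_λ : λ ∈ Ω[η]} is injective, where Ω[η] := {λ : |⟨φ_λ, η⟩| = κ_λ}. Let C > 0 and take α = Cδ. Then for every δ > 0, every yδ with ‖yδ − y⋆‖ ≤ δ, and every minimizer xαδ of 𝒜_{α,yδ}(x) := ½‖A W x − yδ‖² + α(R(x) + ‖W x‖_{1,κ}), the Bregman distance satisfies D_ξ^{R}(xαδ, x⋆) ≤ c δ with c := (1 + C‖ν‖)²/(2C). -/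
open scoped ENNReal InnerProductSpace
open Filter

noncomputable section

/-- Convexity of an extended-real-valued functional. -/
def ConvexE {X : Type*} [AddCommGroup X] [Module ℝ X] (Q : X → ℝ≥0∞) : Prop :=
  ∀ x y : X, ∀ t : ℝ, 0 ≤ t → t ≤ 1 →
    Q (t • x + (1 - t) • y) ≤ ENNReal.ofReal t * Q x + ENNReal.ofReal (1 - t) * Q y

/-- Weak (sequential) lower semicontinuity of an extended-real-valued functional. -/
def WeakLSC {X : Type*} [NormedAddCommGroup X] [NormedSpace ℝ X] (Q : X → ℝ≥0∞) : Prop :=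
  ∀ (x : X) (u : ℕ → X),
    (∀ f : X →L[ℝ] ℝ, Tendsto (fun n => f (u n)) atTop (nhds (f x))) →
    (Q x : EReal) ≤ liminf (fun n => ((Q (u n) : ℝ≥0∞) : EReal)) atTop

lemma ennreal_ereal_coe_eq {a : ℝ≥0∞} (h : a ≠ ⊤) : (a : EReal) = ((a.toReal : ℝ) : EReal) := by
  rw [← EReal.toReal_coe_ennreal]
  exact (EReal.coe_toReal (by simpa [EReal.coe_ennreal_eq_top_iff] using h)
    (EReal.coe_ennreal_ne_bot a)).symm

lemma subgrad_real {X : Type*} [NormedAddCommGroup X] [InnerProductSpace ℝ X]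
    {Q : X → ℝ≥0∞} {xs ξ : X}
    (hsg : ∀ x, (Q xs : EReal) + ((⟪ξ, x - xs⟫_ℝ : ℝ) : EReal) ≤ (Q x : EReal))
    {x : X} (hxs : Q xs ≠ ⊤) (hx : Q x ≠ ⊤) :
    (Q xs).toReal + ⟪ξ, x - xs⟫_ℝ ≤ (Q x).toReal := by
  have := hsg x
  rw [ennreal_ereal_coe_eq hxs, ennreal_ereal_coe_eq hx, ← EReal.coe_add] at this
  exact_mod_cast this

/-- **Strict ℓ¹ co-regularization: Bregman distance rate.**
Under the source condition `W*A*ν ∈ ∂(R + ‖W·‖_{1,κ})(xstar)`, the splitting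
`W*A*ν = ξ + W*η` with `ξ ∈ ∂R(xstar)`, `η ∈ ∂‖W xstar‖_{1,κ}`, and restricted
injectivity of `A` on `H_{Ω[η]}`, every minimizer `xad` of `𝒜_{α,yδ}` with
`α = Cδ` satisfies `D_ξ^R(xad, xstar) ≤ (1 + C‖ν‖)²/(2C) · δ`. -/
theorem strict_bregman_rate
    {X H Y : Type*} [NormedAddCommGroup X] [InnerProductSpace ℝ X] [CompleteSpace X]
    [TopologicalSpace.SeparableSpace X]
    [NormedAddCommGroup H] [InnerProductSpace ℝ H] [CompleteSpace H]
    [NormedAddCommGroup Y] [InnerProductSpace ℝ Y] [CompleteSpace Y]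
    [TopologicalSpace.SeparableSpace Y]
    {Λ : Type*} [Countable Λ] (φ : HilbertBasis Λ ℝ H)
    (κ : Λ → ℝ) (a : ℝ) (ha : 0 < a) (hκ : ∀ l, a ≤ κ l)
    (W : X →L[ℝ] H) (A : H →L[ℝ] Y)
    (R : X → ℝ≥0∞) (hRproper : ∃ x, R x ≠ ∞) (hRconv : ConvexE R) (hRwlsc : WeakLSC R)
    (hjoint : ∃ x, R x + WNorm1 φ κ (W x) ≠ ∞)
    (xstar : X) (ystar : Y) (hsol : A (W xstar) = ystar)
    (ν : Y) (hν : IsSubgrad (fun x => R x + WNorm1 φ κ (W x)) xstar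
      (ContinuousLinearMap.adjoint W (ContinuousLinearMap.adjoint A ν)))
    (ξ : X) (hξ : IsSubgrad R xstar ξ)
    (η : H) (hη : IsSubgrad (WNorm1 φ κ) (W xstar) η)
    (hsplit : ContinuousLinearMap.adjoint W (ContinuousLinearMap.adjoint A ν) =
      ξ + ContinuousLinearMap.adjoint W η)
    (hinj : Set.InjOn A (Submodule.span ℝ ((fun l => φ l) ''
      {l : Λ | |⟪φ l, η⟫_ℝ| = κ l}) : Set H))
    (C δ : ℝ) (hC : 0 < C) (hδ : 0 < δ)
    (yδ : Y) (hdata : ‖yδ - ystar‖ ≤ δ)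
    (xad : X)
    (hmin : ∀ x : X,
      ENNReal.ofReal (‖A (W xad) - yδ‖ ^ 2 / 2) +
          ENNReal.ofReal (C * δ) * (R xad + WNorm1 φ κ (W xad)) ≤
        ENNReal.ofReal (‖A (W x) - yδ‖ ^ 2 / 2) +
          ENNReal.ofReal (C * δ) * (R x + WNorm1 φ κ (W x))) :
    Breg R ξ xstar xad ≤ (((1 + C * ‖ν‖) ^ 2 / (2 * C) * δ : ℝ) : EReal) := by
  classical
  set e := ContinuousLinearMap.adjoint W (ContinuousLinearMap.adjoint A ν) with he
  set N : H → ℝ≥0∞ := WNorm1 φ κ with hNdef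
  set Q : X → ℝ≥0∞ := fun x => R x + N (W x) with hQdef
  have hαpos : 0 < C * δ := mul_pos hC hδ
  obtain ⟨x0, hx0⟩ := hjoint
  have hx0' : Q x0 ≠ ⊤ := hx0
  -- Q xstar finite
  have hQs : Q xstar ≠ ⊤ := by
    intro h
    have h1 := hν x0
    change (Q xstar : EReal) + ((⟪e, x0 - xstar⟫_ℝ : ℝ) : EReal) ≤ (Q x0 : EReal) at h1
    rw [h] at h1
    simp only [EReal.coe_ennreal_top, EReal.top_add_coe, top_le_iff,
      EReal.coe_ennreal_eq_top_iff] at h1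
    exact hx0' h1
  -- Q xad finite
  have hQad : Q xad ≠ ⊤ := by
    intro h
    have h1 := hmin x0
    have hRfin : ENNReal.ofReal (‖A (W x0) - yδ‖ ^ 2 / 2) +
        ENNReal.ofReal (C * δ) * Q x0 ≠ ⊤ :=
      ENNReal.add_ne_top.2 ⟨ENNReal.ofReal_ne_top,
        ENNReal.mul_ne_top ENNReal.ofReal_ne_top hx0'⟩
    have hmulTop : ENNReal.ofReal (C * δ) * Q xad = ⊤ := by
      rw [h, ENNReal.mul_top ((ENNReal.ofReal_pos.2 hαpos).ne')]
    rw [hmulTop, add_top] at h1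
    exact hRfin (top_le_iff.mp h1)
  have hRs : R xstar ≠ ⊤ := fun h => hQs (by simp [hQdef, h])
  have hNs : N (W xstar) ≠ ⊤ := fun h => hQs (by simp [hQdef, h])
  have hRad : R xad ≠ ⊤ := fun h => hQad (by simp [hQdef, h])
  have hNad : N (W xad) ≠ ⊤ := fun h => hQad (by simp [hQdef, h])
  -- real-valued quantities
  set rad : Y := A (W xad) - yδ with hrad
  have hrs_le : ‖A (W xstar) - yδ‖ ≤ δ := by
    rw [hsol, ← norm_neg]; simpa [norm_sub_rev] using hdata
  -- minimizer inequality in ℝ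
  have h1 : ‖rad‖ ^ 2 / 2 + C * δ * (Q xad).toReal ≤
      ‖A (W xstar) - yδ‖ ^ 2 / 2 + C * δ * (Q xstar).toReal := by
    have := hmin xstar
    have hL : ENNReal.ofReal (‖rad‖ ^ 2 / 2) + ENNReal.ofReal (C * δ) * Q xad ≠ ⊤ :=
      ENNReal.add_ne_top.2 ⟨ENNReal.ofReal_ne_top,
        ENNReal.mul_ne_top ENNReal.ofReal_ne_top hQad⟩
    have hR : ENNReal.ofReal (‖A (W xstar) - yδ‖ ^ 2 / 2) +
        ENNReal.ofReal (C * δ) * Q xstar ≠ ⊤ :=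
      ENNReal.add_ne_top.2 ⟨ENNReal.ofReal_ne_top,
        ENNReal.mul_ne_top ENNReal.ofReal_ne_top hQs⟩
    have h2 := (ENNReal.toReal_le_toReal hL hR).2 this
    rw [ENNReal.toReal_add ENNReal.ofReal_ne_top
        (ENNReal.mul_ne_top ENNReal.ofReal_ne_top hQad),
      ENNReal.toReal_add ENNReal.ofReal_ne_top
        (ENNReal.mul_ne_top ENNReal.ofReal_ne_top hQs),
      ENNReal.toReal_mul, ENNReal.toReal_mul] at h2
    simp only [ENNReal.toReal_ofReal hαpos.le,
      ENNReal.toReal_ofReal (by positivity : (0:ℝ) ≤ ‖rad‖ ^ 2 / 2),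
      ENNReal.toReal_ofReal (by positivity : (0:ℝ) ≤ ‖A (W xstar) - yδ‖ ^ 2 / 2)] at h2
    exact h2
  -- subgradient inequality for Q in ℝ
  have h2 : (Q xstar).toReal + ⟪e, xad - xstar⟫_ℝ ≤ (Q xad).toReal := by
    refine subgrad_real (fun x => ?_) hQs hQad
    simpa [hQdef, hNdef] using hν x
  -- inner product identity
  have hip : ⟪e, xad - xstar⟫_ℝ = ⟪ν, rad⟫_ℝ - ⟪ν, A (W xstar) - yδ⟫_ℝ := by
    rw [he, ContinuousLinearMap.adjoint_inner_left, ContinuousLinearMap.adjoint_inner_left]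
    rw [map_sub, map_sub, hrad]
    rw [show A (W xad) - A (W xstar) = (A (W xad) - yδ) - (A (W xstar) - yδ) by abel]
    rw [inner_sub_right]
  -- bounds on inner products
  have hb1 : ⟪ν, rad⟫_ℝ ≥ -(‖ν‖ * ‖rad‖) := by
    have h := real_inner_le_norm ν (-rad)
    rw [inner_neg_right, norm_neg] at h
    linarith
  have hb2 : ⟪ν, A (W xstar) - yδ⟫_ℝ ≤ ‖ν‖ * δ := by
    calc ⟪ν, A (W xstar) - yδ⟫_ℝ ≤ ‖ν‖ * ‖A (W xstar) - yδ‖ := real_inner_le_norm _ _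
    _ ≤ ‖ν‖ * δ := by
        exact mul_le_mul_of_nonneg_left hrs_le (norm_nonneg ν)
  -- main quantitative bound
  set DQ : ℝ := (Q xad).toReal - (Q xstar).toReal - ⟪e, xad - xstar⟫_ℝ with hDQdef
  have hsq : ‖A (W xstar) - yδ‖ ^ 2 ≤ δ ^ 2 := by
    nlinarith [norm_nonneg (A (W xstar) - yδ)]
  have hmb1 : C * δ * (-(‖ν‖ * ‖rad‖)) ≤ C * δ * ⟪ν, rad⟫_ℝ :=
    mul_le_mul_of_nonneg_left hb1 hαpos.le
  have hmb2 : C * δ * ⟪ν, A (W xstar) - yδ⟫_ℝ ≤ C * δ * (‖ν‖ * δ) :=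
    mul_le_mul_of_nonneg_left hb2 hαpos.le
  have hDQ : C * δ * DQ ≤ δ ^ 2 * (1 + C * ‖ν‖) ^ 2 / 2 := by
    rw [hDQdef, hip]
    linarith [h1, hsq, hmb1, hmb2, sq_nonneg (‖rad‖ - C * δ * ‖ν‖)]
  have hDQfinal : DQ ≤ (1 + C * ‖ν‖) ^ 2 / (2 * C) * δ := by
    rw [div_mul_eq_mul_div, le_div_iff₀ (by positivity : (0:ℝ) < 2 * C)]
    nlinarith [hDQ, hδ, mul_pos hC hδ]
  -- split the Bregman distance
  have hipsplit : ⟪e, xad - xstar⟫_ℝ =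
      ⟪ξ, xad - xstar⟫_ℝ + ⟪η, W xad - W xstar⟫_ℝ := by
    rw [hsplit, inner_add_left, ContinuousLinearMap.adjoint_inner_left, map_sub]
  have hNineq : (N (W xstar)).toReal + ⟪η, W xad - W xstar⟫_ℝ ≤ (N (W xad)).toReal := by
    have := subgrad_real (Q := N) (fun h' => hη h') hNs hNad
    simpa using this
  have hQsplit_ad : (Q xad).toReal = (R xad).toReal + (N (W xad)).toReal :=
    ENNReal.toReal_add hRad hNad
  have hQsplit_s : (Q xstar).toReal = (R xstar).toReal + (N (W xstar)).toReal :=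
    ENNReal.toReal_add hRs hNs
  have hDR : (R xad).toReal - (R xstar).toReal - ⟪ξ, xad - xstar⟫_ℝ ≤ DQ := by
    rw [hDQdef, hQsplit_ad, hQsplit_s, hipsplit]
    linarith
  -- conclude
  rw [Breg, ennreal_ereal_coe_eq hRad, ennreal_ereal_coe_eq hRs, ← EReal.coe_sub,
    ← EReal.coe_sub]
  exact_mod_cast hDR.trans hDQfinal
end
end

section
/- Let X, H, Y be separable real Hilbert spaces, W : X → H and A : H → Y bounded linear, R : X → [0,∞] proper, convex and weakly lower semicontinuous, (φ_λ)_{λ∈Λ} an orthonormal basis of H with countable Λ, and weights κ_λ ≥ a > 0. Suppose (x⋆, y⋆) satisfies A W x⋆ = y⋆, there exists ν ∈ Y with W*A*ν ∈ ∂(R + ‖W·‖_{1,κ})(x⋆), and there exist ξ ∈ ∂R(x⋆) and η ∈ ∂‖W x⋆‖_{1,κ} with W*A*ν = ξ + W*η, and the restriction A_{Ω[η]} of A to H_{Ω[η]} := span{φ_λ : λ ∈ Ω[η]} is injective, where Ω[η] := {λ : |⟨φ_λ, η⟩| = κ_λ}. Let C > 0 and take α = Cδ. Then for every δ > 0, every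 yδ with ‖yδ − y⋆‖ ≤ δ, and every minimizer xαδ of 𝒜_{α,yδ}(x) := ½‖A W x − yδ‖² + α(R(x) + ‖W x‖_{1,κ}), one has ‖W xαδ − W x⋆‖ ≤ d δ with d := 2‖A_{Ω[η]}⁻¹‖(1 + C‖ν‖) + ((1 + ‖A_{Ω[η]}⁻¹‖‖A‖)/m[η]) · (1 + C‖ν‖)²/(2C), where m[η] := inf{κ_λ − |⟨φ_λ, η⟩| : λ ∉ Ω[η]}. -/
open scoped ENNReal InnerProductSpace
open Filter

noncomputable section

lemma ereal_coe_ennreal_ne_top {p : ℝ≥0∞} (hp : p ≠ ∞) :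
    ((p : EReal)) = ((p.toReal : ℝ) : EReal) := by
  rw [← ENNReal.ofReal_toReal hp, EReal.coe_ennreal_ofReal,
    max_eq_left ENNReal.toReal_nonneg, ENNReal.toReal_ofReal ENNReal.toReal_nonneg]

lemma isSubgrad_ne_top {X : Type*} [NormedAddCommGroup X] [InnerProductSpace ℝ X]
    {Q : X → ℝ≥0∞} {xs ζ : X} (h : IsSubgrad Q xs ζ) {x : X} (hx : Q x ≠ ∞) :
    Q xs ≠ ∞ := by
  intro htop
  have := h x
  rw [htop] at this
  simp only [EReal.coe_ennreal_top] at this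
  rw [EReal.top_add_coe] at this
  exact (EReal.coe_ennreal_eq_top_iff.mp (top_le_iff.mp this)) |> hx

lemma isSubgrad_real {X : Type*} [NormedAddCommGroup X] [InnerProductSpace ℝ X]
    {Q : X → ℝ≥0∞} {xs ζ : X} (h : IsSubgrad Q xs ζ) {x : X} (hx : Q x ≠ ∞)
    (hxs : Q xs ≠ ∞) :
    (Q xs).toReal + ⟪ζ, x - xs⟫_ℝ ≤ (Q x).toReal := by
  have := h x
  rw [ereal_coe_ennreal_ne_top hx, ereal_coe_ennreal_ne_top hxs, ← EReal.coe_add] at this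
  exact_mod_cast this

section Coord
variable {H : Type*} [NormedAddCommGroup H] [InnerProductSpace ℝ H]
  {Λ : Type*} (φ : HilbertBasis Λ ℝ H) (κ : Λ → ℝ)

lemma coef_perturb (h : H) (l j : Λ) (s : ℝ) [Decidable (j = l)] :
    ⟪φ j, h + s • φ l⟫_ℝ = ⟪φ j, h⟫_ℝ + if j = l then s else 0 := by
  rw [inner_add_right, real_inner_smul_right]
  by_cases hj : j = l
  · subst hj
    have h1 : ⟪φ j, φ j⟫_ℝ = 1 := by
      have := φ.orthonormal.1 j
      rw [real_inner_self_eq_norm_mul_norm, this]; ring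
    rw [h1, if_pos rfl]; ring
  · have h0 : ⟪φ j, φ l⟫_ℝ = 0 := φ.orthonormal.2 hj
    rw [h0, if_neg hj]; ring

lemma wnorm1_update (h : H) (l : Λ) (s : ℝ) :
    WNorm1 φ κ (h + s • φ l) + ENNReal.ofReal (κ l * |⟪φ l, h⟫_ℝ|)
      = WNorm1 φ κ h + ENNReal.ofReal (κ l * |⟪φ l, h⟫_ℝ + s|) := by
  classical
  unfold WNorm1
  rw [ENNReal.tsum_eq_add_tsum_ite (f := fun j => ENNReal.ofReal (κ j * |⟪φ j, h + s • φ l⟫_ℝ|)) l,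
    ENNReal.tsum_eq_add_tsum_ite (f := fun j => ENNReal.ofReal (κ j * |⟪φ j, h⟫_ℝ|)) l]
  have he : (∑' j, if j = l then 0 else ENNReal.ofReal (κ j * |⟪φ j, h + s • φ l⟫_ℝ|))
      = ∑' j, if j = l then 0 else ENNReal.ofReal (κ j * |⟪φ j, h⟫_ℝ|) := by
    congr 1; funext j
    by_cases hj : j = l
    · simp [hj]
    · rw [if_neg hj, if_neg hj, coef_perturb φ h l j s, if_neg hj, add_zero]
  rw [he, coef_perturb φ h l l s, if_pos rfl]
  ring

/-- key one-coordinate inequality from the subgradient property. -/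
lemma subgrad_coord {hs η : H} (hη : IsSubgrad (WNorm1 φ κ) hs η)
    (hfin : WNorm1 φ κ hs ≠ ∞) (hκ0 : ∀ l, 0 ≤ κ l) (l : Λ) (s : ℝ) :
    κ l * |⟪φ l, hs⟫_ℝ| + ⟪φ l, η⟫_ℝ * s ≤ κ l * |⟪φ l, hs⟫_ℝ + s| := by
  set g := hs + s • φ l with hg
  have hc1 : (0:ℝ) ≤ κ l * |⟪φ l, hs⟫_ℝ| := mul_nonneg (hκ0 l) (abs_nonneg _)
  have hc2 : (0:ℝ) ≤ κ l * |⟪φ l, hs⟫_ℝ + s| := mul_nonneg (hκ0 l) (abs_nonneg _)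
  have hupd := wnorm1_update φ κ hs l s
  have hgfin : WNorm1 φ κ g ≠ ∞ := by
    intro htop
    rw [← hg] at hupd
    rw [htop, top_add] at hupd
    rcases ENNReal.add_eq_top.mp hupd.symm with hcase | hcase
    · exact hfin hcase
    · exact ENNReal.ofReal_ne_top hcase
  have hsub := hη g
  have hginner : ⟪η, g - hs⟫_ℝ = ⟪φ l, η⟫_ℝ * s := by
    rw [hg]
    simp only [add_sub_cancel_left, real_inner_smul_right]
    rw [real_inner_comm]; ring
  rw [hginner] at hsub
  have h1 : (WNorm1 φ κ hs).toReal + ⟪φ l, η⟫_ℝ * s ≤ (WNorm1 φ κ g).toReal := by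
    rw [ereal_coe_ennreal_ne_top hgfin, ereal_coe_ennreal_ne_top hfin, ← EReal.coe_add] at hsub
    exact_mod_cast hsub
  rw [← hg] at hupd
  have h2 : (WNorm1 φ κ g).toReal + κ l * |⟪φ l, hs⟫_ℝ|
      = (WNorm1 φ κ hs).toReal + κ l * |⟪φ l, hs⟫_ℝ + s| := by
    have := congrArg ENNReal.toReal hupd
    rwa [ENNReal.toReal_add hgfin ENNReal.ofReal_ne_top,
      ENNReal.toReal_add hfin ENNReal.ofReal_ne_top,
      ENNReal.toReal_ofReal hc1, ENNReal.toReal_ofReal hc2] at this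
  linarith

lemma eta_coord_le {hs η : H} (hη : IsSubgrad (WNorm1 φ κ) hs η)
    (hfin : WNorm1 φ κ hs ≠ ∞) (hκ0 : ∀ l, 0 ≤ κ l) (l : Λ) :
    |⟪φ l, η⟫_ℝ| ≤ κ l := by
  have hp := subgrad_coord φ κ hη hfin hκ0 l 1
  have hm := subgrad_coord φ κ hη hfin hκ0 l (-1)
  have e1 : |⟪φ l, hs⟫_ℝ + 1| ≤ |⟪φ l, hs⟫_ℝ| + 1 := by
    calc |⟪φ l, hs⟫_ℝ + 1| ≤ |⟪φ l, hs⟫_ℝ| + |(1:ℝ)| := abs_add_le _ _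
    _ = |⟪φ l, hs⟫_ℝ| + 1 := by rw [abs_one]
  have e2 : |⟪φ l, hs⟫_ℝ + -1| ≤ |⟪φ l, hs⟫_ℝ| + 1 := by
    calc |⟪φ l, hs⟫_ℝ + -1| ≤ |⟪φ l, hs⟫_ℝ| + |(-1:ℝ)| := abs_add_le _ _
    _ = |⟪φ l, hs⟫_ℝ| + 1 := by rw [abs_neg, abs_one]
  rw [abs_le]
  constructor <;> nlinarith [hκ0 l]

lemma eta_coord_eq {hs η : H} (hη : IsSubgrad (WNorm1 φ κ) hs η)
    (hfin : WNorm1 φ κ hs ≠ ∞) (hκ0 : ∀ l, 0 ≤ κ l) (l : Λ) :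
    ⟪φ l, η⟫_ℝ * ⟪φ l, hs⟫_ℝ = κ l * |⟪φ l, hs⟫_ℝ| := by
  have hm := subgrad_coord φ κ hη hfin hκ0 l (-⟪φ l, hs⟫_ℝ)
  simp only [add_neg_cancel, abs_zero, mul_zero] at hm
  have hle : ⟪φ l, η⟫_ℝ * ⟪φ l, hs⟫_ℝ ≤ κ l * |⟪φ l, hs⟫_ℝ| := by
    calc ⟪φ l, η⟫_ℝ * ⟪φ l, hs⟫_ℝ ≤ |⟪φ l, η⟫_ℝ * ⟪φ l, hs⟫_ℝ| := le_abs_self _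
    _ = |⟪φ l, η⟫_ℝ| * |⟪φ l, hs⟫_ℝ| := abs_mul _ _
    _ ≤ κ l * |⟪φ l, hs⟫_ℝ| :=
        mul_le_mul_of_nonneg_right (eta_coord_le φ κ hη hfin hκ0 l) (abs_nonneg _)
  nlinarith

lemma coord_zero_off_support {hs η : H} (hη : IsSubgrad (WNorm1 φ κ) hs η)
    (hfin : WNorm1 φ κ hs ≠ ∞) (hκ0 : ∀ l, 0 ≤ κ l) (l : Λ)
    (hl : |⟪φ l, η⟫_ℝ| ≠ κ l) : ⟪φ l, hs⟫_ℝ = 0 := by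
  have heq := eta_coord_eq φ κ hη hfin hκ0 l
  have hlt : |⟪φ l, η⟫_ℝ| < κ l :=
    lt_of_le_of_ne (eta_coord_le φ κ hη hfin hκ0 l) hl
  by_contra hne
  have habs : 0 < |⟪φ l, hs⟫_ℝ| := abs_pos.mpr hne
  have : ⟪φ l, η⟫_ℝ * ⟪φ l, hs⟫_ℝ ≤ |⟪φ l, η⟫_ℝ| * |⟪φ l, hs⟫_ℝ| := by
    rw [← abs_mul]; exact le_abs_self _
  nlinarith

end Coord

section Sum
variable {H : Type*} [NormedAddCommGroup H] [InnerProductSpace ℝ H]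
  {Λ : Type*} (φ : HilbertBasis Λ ℝ H) (κ : Λ → ℝ)

lemma wnorm1_summable {h : H} (hκ0 : ∀ l, 0 ≤ κ l) (hfin : WNorm1 φ κ h ≠ ∞) :
    Summable (fun l => κ l * |⟪φ l, h⟫_ℝ|) := by
  have hsum := ENNReal.summable_toReal hfin
  have : (fun l => (ENNReal.ofReal (κ l * |⟪φ l, h⟫_ℝ|)).toReal)
      = fun l => κ l * |⟪φ l, h⟫_ℝ| := by
    funext l
    exact ENNReal.toReal_ofReal (mul_nonneg (hκ0 l) (abs_nonneg _))
  rwa [this] at hsum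

lemma wnorm1_tsum {h : H} (hκ0 : ∀ l, 0 ≤ κ l) (hfin : WNorm1 φ κ h ≠ ∞) :
    ∑' l, κ l * |⟪φ l, h⟫_ℝ| = (WNorm1 φ κ h).toReal := by
  rw [WNorm1, ENNReal.tsum_toReal_eq (fun _ => ENNReal.ofReal_ne_top)]
  congr 1
  funext l
  exact (ENNReal.toReal_ofReal (mul_nonneg (hκ0 l) (abs_nonneg _))).symm

end Sum

set_option maxHeartbeats 1000000 in
/-- **Strict ℓ¹ co-regularization: linear convergence in norm.**
Under the source condition `W*A*ν ∈ ∂(R + ‖W·‖_{1,κ})(xstar)`, the splitting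
`W*A*ν = ξ + W*η` with `ξ ∈ ∂R(xstar)`, `η ∈ ∂‖W xstar‖_{1,κ}`, and restricted
injectivity of `A` on `H_{Ω[η]}`, with `K ≥ 0` a bound for the inverse of the restriction `A_{Ω[η]}` (the
operator norm `‖A_{Ω[η]}⁻¹‖` is the least such `K`), every minimizer `xad` of
`𝒜_{α,yδ}` with `α = Cδ` satisfies `‖W xad - W xstar‖ ≤ d δ`, where
`d = 2K(1 + C‖ν‖) + ((1 + K‖A‖)/m[η]) (1 + C‖ν‖)²/(2C)`. -/
theorem strict_norm_rate
    {X H Y : Type*} [NormedAddCommGroup X] [InnerProductSpace ℝ X] [CompleteSpace X]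
    [TopologicalSpace.SeparableSpace X]
    [NormedAddCommGroup H] [InnerProductSpace ℝ H] [CompleteSpace H]
    [NormedAddCommGroup Y] [InnerProductSpace ℝ Y] [CompleteSpace Y]
    [TopologicalSpace.SeparableSpace Y]
    {Λ : Type*} [Countable Λ] (φ : HilbertBasis Λ ℝ H)
    (κ : Λ → ℝ) (a : ℝ) (ha : 0 < a) (hκ : ∀ l, a ≤ κ l)
    (W : X →L[ℝ] H) (A : H →L[ℝ] Y)
    (R : X → ℝ≥0∞) (hRproper : ∃ x, R x ≠ ∞) (hRconv : ConvexE R) (hRwlsc : WeakLSC R)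
    (hjoint : ∃ x, R x + WNorm1 φ κ (W x) ≠ ∞)
    (xstar : X) (ystar : Y) (hsol : A (W xstar) = ystar)
    (ν : Y) (hν : IsSubgrad (fun x => R x + WNorm1 φ κ (W x)) xstar
      (ContinuousLinearMap.adjoint W (ContinuousLinearMap.adjoint A ν)))
    (ξ : X) (hξ : IsSubgrad R xstar ξ)
    (η : H) (hη : IsSubgrad (WNorm1 φ κ) (W xstar) η)
    (hsplit : ContinuousLinearMap.adjoint W (ContinuousLinearMap.adjoint A ν) =
      ξ + ContinuousLinearMap.adjoint W η)
    (hinj : Set.InjOn A (Submodule.span ℝ ((fun l => φ l) ''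
      {l : Λ | |⟪φ l, η⟫_ℝ| = κ l}) : Set H))
    (K : ℝ) (hK0 : 0 ≤ K)
    (hKinv : ∀ g ∈
      (Submodule.span ℝ ((fun l => φ l) '' {l : Λ | |⟪φ l, η⟫_ℝ| = κ l}) : Set H),
      ‖g‖ ≤ K * ‖A g‖)
    (C δ : ℝ) (hC : 0 < C) (hδ : 0 < δ)
    (yδ : Y) (hdata : ‖yδ - ystar‖ ≤ δ)
    (xad : X)
    (hmin : ∀ x : X,
      ENNReal.ofReal (‖A (W xad) - yδ‖ ^ 2 / 2) +
          ENNReal.ofReal (C * δ) * (R xad + WNorm1 φ κ (W xad)) ≤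
        ENNReal.ofReal (‖A (W x) - yδ‖ ^ 2 / 2) +
          ENNReal.ofReal (C * δ) * (R x + WNorm1 φ κ (W x))) :
    ‖W xad - W xstar‖ ≤
      (2 * K * (1 + C * ‖ν‖) +
        (1 + K * ‖A‖) /
            sInf ((fun l => κ l - |⟪φ l, η⟫_ℝ|) '' {l : Λ | |⟪φ l, η⟫_ℝ| ≠ κ l}) *
          ((1 + C * ‖ν‖) ^ 2 / (2 * C))) * δ := by
  classical
  -- notation
  set hh := W xad with hhdef
  set hs := W xstar with hsdef
  set e : Λ → ℝ := fun l => ⟪φ l, η⟫_ℝ with hedef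
  set bb : Λ → ℝ := fun l => ⟪φ l, hh⟫_ℝ with hbdef
  set cc : Λ → ℝ := fun l => ⟪φ l, hs⟫_ℝ with hcdef
  have hκ0 : ∀ l, 0 ≤ κ l := fun l => le_trans ha.le (hκ l)
  set Q : X → ℝ≥0∞ := fun x => R x + WNorm1 φ κ (W x) with hQdef
  -- finiteness at xstar
  obtain ⟨x₀, hx₀⟩ := hjoint
  have hQs : Q xstar ≠ ∞ := isSubgrad_ne_top hν hx₀
  have hRs : R xstar ≠ ∞ := fun htop => hQs (by simp [hQdef, htop])
  have hNs : WNorm1 φ κ hs ≠ ∞ := fun htop => hQs (by simp [hQdef, ← hsdef, htop])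
  -- finiteness at xad
  have hαpos : (0:ℝ) < C * δ := mul_pos hC hδ
  have hQa : Q xad ≠ ∞ := by
    have hm := hmin xstar
    intro htop
    have hR : ENNReal.ofReal (‖A (W xstar) - yδ‖ ^ 2 / 2) +
        ENNReal.ofReal (C * δ) * (R xstar + WNorm1 φ κ (W xstar)) ≠ ∞ := by
      refine ENNReal.add_ne_top.mpr ⟨ENNReal.ofReal_ne_top, ENNReal.mul_ne_top ENNReal.ofReal_ne_top ?_⟩
      exact hQs
    have hL : ENNReal.ofReal (‖A (W xad) - yδ‖ ^ 2 / 2) +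
        ENNReal.ofReal (C * δ) * (R xad + WNorm1 φ κ (W xad)) = ∞ := by
      have : ENNReal.ofReal (C * δ) * (R xad + WNorm1 φ κ (W xad)) = ∞ := by
        refine ENNReal.mul_eq_top.mpr (Or.inl ⟨?_, htop⟩)
        simpa using ENNReal.ofReal_pos.mpr hαpos |>.ne'
      simp [this]
    rw [hL] at hm
    exact hR (top_le_iff.mp hm)
  have hRa : R xad ≠ ∞ := fun htop => hQa (by simp [hQdef, htop])
  have hNa : WNorm1 φ κ hh ≠ ∞ := fun htop => hQa (by simp [hQdef, ← hhdef, htop])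
  -- real minimality inequality
  set r := ‖A hh - yδ‖ with hrdef
  set qa := (Q xad).toReal with hqadef
  set qs := (Q xstar).toReal with hqsdef
  have hr0 : 0 ≤ r := norm_nonneg _
  have hmin' : r ^ 2 / 2 + (C * δ) * qa ≤ δ ^ 2 / 2 + (C * δ) * qs := by
    have hm := hmin xstar
    have hLne : ENNReal.ofReal (‖A (W xad) - yδ‖ ^ 2 / 2) +
        ENNReal.ofReal (C * δ) * (R xad + WNorm1 φ κ (W xad)) ≠ ∞ :=
      ENNReal.add_ne_top.mpr ⟨ENNReal.ofReal_ne_top, ENNReal.mul_ne_top ENNReal.ofReal_ne_top hQa⟩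
    have hRne : ENNReal.ofReal (‖A (W xstar) - yδ‖ ^ 2 / 2) +
        ENNReal.ofReal (C * δ) * (R xstar + WNorm1 φ κ (W xstar)) ≠ ∞ :=
      ENNReal.add_ne_top.mpr ⟨ENNReal.ofReal_ne_top, ENNReal.mul_ne_top ENNReal.ofReal_ne_top hQs⟩
    have := (ENNReal.toReal_le_toReal hLne hRne).mpr hm
    rw [ENNReal.toReal_add ENNReal.ofReal_ne_top (ENNReal.mul_ne_top ENNReal.ofReal_ne_top hQa),
      ENNReal.toReal_add ENNReal.ofReal_ne_top (ENNReal.mul_ne_top ENNReal.ofReal_ne_top hQs),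
      ENNReal.toReal_mul, ENNReal.toReal_mul,
      ENNReal.toReal_ofReal (show (0:ℝ) ≤ ‖A (W xad) - yδ‖ ^ 2 / 2 by positivity),
      ENNReal.toReal_ofReal (show (0:ℝ) ≤ ‖A (W xstar) - yδ‖ ^ 2 / 2 by positivity),
      ENNReal.toReal_ofReal hαpos.le] at this
    have hdist : ‖A (W xstar) - yδ‖ ^ 2 / 2 ≤ δ ^ 2 / 2 := by
      have h1 : ‖A (W xstar) - yδ‖ ≤ δ := by
        rw [show A (W xstar) = A hs from rfl, hsol, norm_sub_rev]
        exact hdata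
      nlinarith [norm_nonneg (A (W xstar) - yδ)]
    calc r ^ 2 / 2 + C * δ * qa ≤ ‖A (W xstar) - yδ‖ ^ 2 / 2 + C * δ * qs := this
    _ ≤ δ ^ 2 / 2 + C * δ * qs := by linarith
  -- adjoint identities
  have hadj : ∀ z : X, ⟪ContinuousLinearMap.adjoint W (ContinuousLinearMap.adjoint A ν), z⟫_ℝ
      = ⟪ν, A (W z)⟫_ℝ := by
    intro z
    rw [ContinuousLinearMap.adjoint_inner_left, ContinuousLinearMap.adjoint_inner_left]
  -- total Bregman-type quantity
  set n := ‖ν‖ with hndef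
  have hn0 : 0 ≤ n := norm_nonneg _
  have hsrc : qs + ⟪ν, A hh - A hs⟫_ℝ ≤ qa := by
    have h0 := isSubgrad_real hν hQa hQs
    rw [hadj] at h0
    rw [map_sub W, map_sub A] at h0
    exact h0
  set DT := qa - qs - ⟪ν, A hh - A hs⟫_ℝ with hDTdef
  have hDT0 : 0 ≤ DT := by rw [hDTdef]; linarith
  have hkey : r ^ 2 / 2 + (C * δ) * DT ≤ δ ^ 2 / 2 + (C * δ) * n * r + (C * δ) * n * δ := by
    have hsplit2 : -⟪ν, A hh - A hs⟫_ℝ = ⟪ν, yδ - A hh⟫_ℝ + ⟪ν, A hs - yδ⟫_ℝ := by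
      rw [← inner_add_right, ← inner_neg_right]
      congr 1
      abel
    have hCS1 : ⟪ν, yδ - A hh⟫_ℝ ≤ n * r := by
      calc ⟪ν, yδ - A hh⟫_ℝ ≤ ‖ν‖ * ‖yδ - A hh‖ := real_inner_le_norm _ _
      _ = n * r := by rw [norm_sub_rev]
    have hCS2 : ⟪ν, A hs - yδ⟫_ℝ ≤ n * δ := by
      calc ⟪ν, A hs - yδ⟫_ℝ ≤ ‖ν‖ * ‖A hs - yδ‖ := real_inner_le_norm _ _
      _ ≤ n * δ := by
          refine mul_le_mul_of_nonneg_left ?_ hn0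
          rw [hsol, norm_sub_rev]
          exact hdata
    have : (C * δ) * (-⟪ν, A hh - A hs⟫_ℝ) ≤ (C * δ) * n * r + (C * δ) * n * δ := by
      rw [hsplit2]
      have := mul_le_mul_of_nonneg_left (add_le_add hCS1 hCS2) hαpos.le
      linarith [this]
    have hDT' : (C * δ) * DT = (C * δ) * qa - (C * δ) * qs - (C * δ) * ⟪ν, A hh - A hs⟫_ℝ := by
      rw [hDTdef]; ring
    linarith [hmin']
  -- residual bound and Bregman bound
  clear_value r n qa qs DT
  have hres : r ≤ δ + 2 * (C * δ) * n := by
    nlinarith [hkey, hDT0, mul_nonneg hαpos.le hn0]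
  have hDTbound : DT ≤ δ * (1 + C * n) ^ 2 / (2 * C) := by
    have h1 : (C * δ) * DT ≤ δ ^ 2 / 2 + (C * δ) * n * δ + ((C * δ) * n) ^ 2 / 2 := by
      nlinarith [hkey, sq_nonneg (r - (C * δ) * n)]
    have h2 : δ ^ 2 / 2 + (C * δ) * n * δ + ((C * δ) * n) ^ 2 / 2
        = (C * δ) * (δ * (1 + C * n) ^ 2 / (2 * C)) := by
      field_simp
      ring
    rw [h2] at h1
    exact le_of_mul_le_mul_left h1 hαpos
  have hAdiff : ‖A hh - A hs‖ ≤ 2 * δ * (1 + C * n) := by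
    have : A hh - A hs = (A hh - yδ) + (yδ - A hs) := by abel
    rw [this]
    calc ‖(A hh - yδ) + (yδ - A hs)‖ ≤ ‖A hh - yδ‖ + ‖yδ - A hs‖ := norm_add_le _ _
    _ ≤ (δ + 2 * (C * δ) * n) + δ := by
        refine add_le_add (hrdef ▸ hres) ?_
        rw [hsol]
        exact hdata
    _ = 2 * δ * (1 + C * n) := by ring
  -- ===== Part 2 : the ℓ¹ analysis =====
  -- split the Bregman distance
  have hQar : qa = (R xad).toReal + (WNorm1 φ κ hh).toReal := by
    rw [hqadef]
    exact ENNReal.toReal_add hRa hNa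
  have hQsr : qs = (R xstar).toReal + (WNorm1 φ κ hs).toReal := by
    rw [hqsdef]
    exact ENNReal.toReal_add hRs hNs
  have hDR : 0 ≤ (R xad).toReal - (R xstar).toReal - ⟪ξ, xad - xstar⟫_ℝ := by
    have := isSubgrad_real hξ hRa hRs
    linarith
  have hsplit' : ⟪ν, A hh - A hs⟫_ℝ = ⟪ξ, xad - xstar⟫_ℝ + ⟪η, hh - hs⟫_ℝ := by
    have h1 := hadj (xad - xstar)
    rw [hsplit, inner_add_left, ContinuousLinearMap.adjoint_inner_left,
      map_sub W, map_sub A] at h1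
    rw [← hhdef, ← hsdef] at h1
    exact h1.symm
  set DN := (WNorm1 φ κ hh).toReal - (WNorm1 φ κ hs).toReal - ⟪η, hh - hs⟫_ℝ with hDNdef
  have hDNle : DN ≤ DT := by
    rw [hDNdef, hDTdef, hQar, hQsr, hsplit']
    linarith
  -- Parseval identities
  have hPb : HasSum (fun l => ⟪φ l, η⟫_ℝ * bb l) ⟪η, hh⟫_ℝ := by
    have h0 := φ.hasSum_inner_mul_inner η hh
    have he' : (fun l => ⟪η, φ l⟫_ℝ * ⟪φ l, hh⟫_ℝ) = fun l => ⟪φ l, η⟫_ℝ * bb l := by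
      funext l
      rw [real_inner_comm η (φ l)]
    rwa [he'] at h0
  have hPc : HasSum (fun l => ⟪φ l, η⟫_ℝ * cc l) ⟪η, hs⟫_ℝ := by
    have h0 := φ.hasSum_inner_mul_inner η hs
    have he' : (fun l => ⟪η, φ l⟫_ℝ * ⟪φ l, hs⟫_ℝ) = fun l => ⟪φ l, η⟫_ℝ * cc l := by
      funext l
      rw [real_inner_comm η (φ l)]
    rwa [he'] at h0
  have hsumκb : Summable (fun l => κ l * |bb l|) := wnorm1_summable φ κ hκ0 hNa
  have hNar : (WNorm1 φ κ hh).toReal = ∑' l, κ l * |bb l| := (wnorm1_tsum φ κ hκ0 hNa).symm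
  have hNsr : (WNorm1 φ κ hs).toReal = ∑' l, κ l * |cc l| := (wnorm1_tsum φ κ hκ0 hNs).symm
  have hcoordeq : ∀ l, ⟪φ l, η⟫_ℝ * cc l = κ l * |cc l| :=
    fun l => eta_coord_eq φ κ hη hNs hκ0 l
  have hetale : ∀ l, |⟪φ l, η⟫_ℝ| ≤ κ l := fun l => eta_coord_le φ κ hη hNs hκ0 l
  have hNsr2 : (WNorm1 φ κ hs).toReal = ⟪η, hs⟫_ℝ := by
    rw [hNsr, ← hPc.tsum_eq]
    exact tsum_congr fun l => (hcoordeq l).symm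
  set t : Λ → ℝ := fun l => κ l * |bb l| - ⟪φ l, η⟫_ℝ * bb l with htdef
  have ht0 : ∀ l, 0 ≤ t l := by
    intro l
    have h1 : ⟪φ l, η⟫_ℝ * bb l ≤ |⟪φ l, η⟫_ℝ| * |bb l| := by
      rw [← abs_mul]
      exact le_abs_self _
    have h2 : |⟪φ l, η⟫_ℝ| * |bb l| ≤ κ l * |bb l| :=
      mul_le_mul_of_nonneg_right (hetale l) (abs_nonneg _)
    simp only [htdef]
    linarith
  have htsummable : Summable t := hsumκb.sub hPb.summable
  have htsum : ∑' l, t l = DN := by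
    rw [htdef, Summable.tsum_sub hsumκb hPb.summable, hPb.tsum_eq, hDNdef, hNar, hNsr2,
      inner_sub_right]
    ring
  -- finiteness of near-support sets
  have hesummable : Summable (fun l => ⟪φ l, η⟫_ℝ * ⟪φ l, η⟫_ℝ) := by
    have h0 := φ.summable_inner_mul_inner η η
    have he' : (fun l => ⟪η, φ l⟫_ℝ * ⟪φ l, η⟫_ℝ)
        = fun l => ⟪φ l, η⟫_ℝ * ⟪φ l, η⟫_ℝ := by
      funext l
      rw [real_inner_comm η (φ l)]
    rwa [he'] at h0
  have hFfin : {l : Λ | a / 2 ≤ |⟪φ l, η⟫_ℝ|}.Finite := by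
    have htend := hesummable.tendsto_cofinite_zero
    have hev : ∀ᶠ l in Filter.cofinite,
        dist (⟪φ l, η⟫_ℝ * ⟪φ l, η⟫_ℝ) 0 < (a / 2) ^ 2 := by
      have := Metric.tendsto_nhds.mp htend ((a / 2) ^ 2) (by positivity)
      exact this
    have hfin := Filter.eventually_cofinite.mp hev
    refine hfin.subset ?_
    intro l hl
    simp only [Set.mem_setOf_eq, Real.dist_eq, sub_zero, not_lt]
    have : a / 2 ≤ |⟪φ l, η⟫_ℝ| := hl
    calc (a / 2) ^ 2 ≤ |⟪φ l, η⟫_ℝ| ^ 2 := by nlinarith [abs_nonneg (⟪φ l, η⟫_ℝ)]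
    _ = |⟪φ l, η⟫_ℝ * ⟪φ l, η⟫_ℝ| := by rw [abs_mul, sq]
  have hΩfin : {l : Λ | |⟪φ l, η⟫_ℝ| = κ l}.Finite := by
    refine hFfin.subset ?_
    intro l hl
    have : |⟪φ l, η⟫_ℝ| = κ l := hl
    have := hκ l
    simp only [Set.mem_setOf_eq]
    linarith
  set Ωf := hΩfin.toFinset with hΩfdef
  have hmemΩf : ∀ l, l ∈ Ωf ↔ |⟪φ l, η⟫_ℝ| = κ l := by
    intro l
    rw [hΩfdef, Set.Finite.mem_toFinset]
    rfl
  -- xfun and S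
  set xfun : Λ → ℝ := fun l => if |⟪φ l, η⟫_ℝ| = κ l then 0 else |bb l| with hxfundef
  have hxfun0 : ∀ l, 0 ≤ xfun l := by
    intro l
    simp only [hxfundef]
    split
    · exact le_refl 0
    · exact abs_nonneg _
  have hxsummable : Summable xfun := by
    refine Summable.of_nonneg_of_le hxfun0 (fun l => ?_) (hsumκb.mul_left (1 / a))
    have h1 : xfun l ≤ |bb l| := by
      simp only [hxfundef]
      split
      · exact abs_nonneg _
      · exact le_refl _
    have h2 : a * |bb l| ≤ κ l * |bb l| := mul_le_mul_of_nonneg_right (hκ l) (abs_nonneg _)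
    calc xfun l ≤ |bb l| := h1
    _ ≤ (1 / a) * (κ l * |bb l|) := by
        rw [one_div, inv_mul_eq_div, le_div_iff₀ ha]
        nlinarith
  set S := ∑' l, xfun l with hSdef
  have hS0 : 0 ≤ S := tsum_nonneg hxfun0
  have hxleS : ∀ l, xfun l ≤ S := fun l => Summable.le_tsum hxsummable l fun j _ => hxfun0 j
  -- m' * S ≤ DN for any valid lower bound m'
  have hSDN : ∀ m' : ℝ, 0 ≤ m' → (∀ l, |⟪φ l, η⟫_ℝ| ≠ κ l → m' ≤ κ l - |⟪φ l, η⟫_ℝ|) →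
      m' * S ≤ DN := by
    intro m' hm'0 hm'lb
    have hterm : ∀ l, m' * xfun l ≤ t l := by
      intro l
      by_cases hl : |⟪φ l, η⟫_ℝ| = κ l
      · simp only [hxfundef, if_pos hl, mul_zero]
        exact ht0 l
      · simp only [hxfundef, if_neg hl]
        have h1 := hm'lb l hl
        have h2 : ⟪φ l, η⟫_ℝ * bb l ≤ |⟪φ l, η⟫_ℝ| * |bb l| := by
          rw [← abs_mul]
          exact le_abs_self _
        simp only [htdef]
        nlinarith [abs_nonneg (bb l)]
    calc m' * S = ∑' l, m' * xfun l := by rw [hSdef, tsum_mul_left]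
    _ ≤ ∑' l, t l := Summable.tsum_le_tsum hterm (hxsummable.mul_left m') htsummable
    _ = DN := htsum
  -- decomposition of hh - hs
  have hcc0 : ∀ l, |⟪φ l, η⟫_ℝ| ≠ κ l → cc l = 0 :=
    fun l hl => coord_zero_off_support φ κ hη hNs hκ0 l hl
  have hhs_sum : HasSum (fun l => cc l • φ l) hs := by
    have h0 := φ.hasSum_repr hs
    have he' : (fun l => φ.repr hs l • φ l) = fun l => cc l • φ l := by
      funext l
      rw [φ.repr_apply_apply]
    rwa [he'] at h0
  have hhs_eq : hs = ∑ l ∈ Ωf, cc l • φ l := by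
    refine hhs_sum.unique (hasSum_sum_of_ne_finset_zero ?_)
    intro l hl
    rw [hcc0 l (fun hc' => hl ((hmemΩf l).mpr hc')), zero_smul]
  set v := (∑ l ∈ Ωf, bb l • φ l) - hs with hvdef
  have hvmem : v ∈ (Submodule.span ℝ ((fun l => φ l) ''
      {l : Λ | |⟪φ l, η⟫_ℝ| = κ l}) : Set H) := by
    rw [hvdef]
    nth_rewrite 1 [hhs_eq]
    rw [← Finset.sum_sub_distrib]
    refine Submodule.sum_mem _ fun l hl => ?_
    rw [← sub_smul]
    exact Submodule.smul_mem _ _ (Submodule.subset_span ⟨l, (hmemΩf l).mp hl, rfl⟩)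
  set hcv := hh - ∑ l ∈ Ωf, bb l • φ l with hcvdef
  have hdecomp : hh - hs = v + hcv := by
    rw [hvdef, hcvdef]
    abel
  have hccoef : ∀ j, ⟪φ j, hcv⟫_ℝ = if |⟪φ j, η⟫_ℝ| = κ j then 0 else bb j := by
    intro j
    rw [hcvdef, inner_sub_right, inner_sum]
    have hterm : ∀ l ∈ Ωf, ⟪φ j, bb l • φ l⟫_ℝ = if j = l then bb l else 0 := by
      intro l _
      rw [real_inner_smul_right]
      by_cases hj : j = l
      · subst hj
        have h1 : ⟪φ j, φ j⟫_ℝ = 1 := by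
          have := φ.orthonormal.1 j
          rw [real_inner_self_eq_norm_mul_norm, this]
          ring
        rw [h1, if_pos rfl]
        ring
      · rw [φ.orthonormal.2 hj, if_neg hj]
        ring
    rw [Finset.sum_congr rfl hterm, Finset.sum_ite_eq Ωf j (fun l => bb l)]
    by_cases hj : j ∈ Ωf
    · rw [if_pos hj, if_pos ((hmemΩf j).mp hj)]
      ring
    · rw [if_neg hj, if_neg (fun hc' => hj ((hmemΩf j).mpr hc'))]
      ring
  have hhcS : ‖hcv‖ ≤ S := by
    have h0 := φ.hasSum_inner_mul_inner hcv hcv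
    have he' : (fun l => ⟪hcv, φ l⟫_ℝ * ⟪φ l, hcv⟫_ℝ) = fun l => xfun l ^ 2 := by
      funext l
      rw [real_inner_comm (φ l) hcv]
      rw [hccoef l]
      simp only [hxfundef]
      split
      · ring
      · rw [sq_abs]
        ring
    rw [he'] at h0
    have hnorm2 : ‖hcv‖ ^ 2 = ∑' l, xfun l ^ 2 := by
      rw [h0.tsum_eq, real_inner_self_eq_norm_sq]
    have hsq : ∑' l, xfun l ^ 2 ≤ S * S := by
      have hle : ∀ l, xfun l ^ 2 ≤ xfun l * S := by
        intro l
        have := hxleS l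
        have := hxfun0 l
        nlinarith
      calc ∑' l, xfun l ^ 2 ≤ ∑' l, xfun l * S :=
        Summable.tsum_le_tsum hle (by
          refine Summable.of_nonneg_of_le (fun l => sq_nonneg _) hle ?_
          exact hxsummable.mul_right S) (hxsummable.mul_right S)
      _ = S * S := by rw [tsum_mul_right, hSdef]
    have hfin2 : ‖hcv‖ ^ 2 ≤ S ^ 2 := by
      rw [hnorm2, sq]
      exact hsq
    calc ‖hcv‖ = Real.sqrt (‖hcv‖ ^ 2) := (Real.sqrt_sq (norm_nonneg hcv)).symm
    _ ≤ Real.sqrt (S ^ 2) := Real.sqrt_le_sqrt hfin2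
    _ = S := Real.sqrt_sq hS0
  -- final assembly
  have hfinal : ‖hh - hs‖ ≤ 2 * K * (1 + C * n) * δ + (1 + K * ‖A‖) * S := by
    have hAv : ‖A v‖ ≤ 2 * δ * (1 + C * n) + ‖A‖ * S := by
      have hveq : A v = (A hh - A hs) - A hcv := by
        have : v = (hh - hs) - hcv := by rw [hdecomp]; abel
        rw [this, map_sub, map_sub]
      rw [hveq]
      calc ‖(A hh - A hs) - A hcv‖ ≤ ‖A hh - A hs‖ + ‖A hcv‖ := norm_sub_le _ _
      _ ≤ 2 * δ * (1 + C * n) + ‖A‖ * S := by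
          refine add_le_add hAdiff ?_
          calc ‖A hcv‖ ≤ ‖A‖ * ‖hcv‖ := A.le_opNorm hcv
          _ ≤ ‖A‖ * S := mul_le_mul_of_nonneg_left hhcS (norm_nonneg A)
    rw [hdecomp]
    calc ‖v + hcv‖ ≤ ‖v‖ + ‖hcv‖ := norm_add_le _ _
    _ ≤ K * ‖A v‖ + S := add_le_add (hKinv v hvmem) hhcS
    _ ≤ K * (2 * δ * (1 + C * n) + ‖A‖ * S) + S :=
        add_le_add (mul_le_mul_of_nonneg_left hAv hK0) le_rfl
    _ = 2 * K * (1 + C * n) * δ + (1 + K * ‖A‖) * S := by ring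
  -- ===== Part 3 : conclusion =====
  set m := sInf ((fun l => κ l - |⟪φ l, η⟫_ℝ|) '' {l : Λ | |⟪φ l, η⟫_ℝ| ≠ κ l}) with hmdef
  have h1KA : (0:ℝ) ≤ 1 + K * ‖A‖ := by positivity
  by_cases hOne : {l : Λ | |⟪φ l, η⟫_ℝ| ≠ κ l}.Nonempty
  · set Ff := hFfin.toFinset with hFfdef
    set s0 : Finset ℝ := insert (a / 2)
      ((Ff.filter (fun l => |⟪φ l, η⟫_ℝ| ≠ κ l)).image (fun l => κ l - |⟪φ l, η⟫_ℝ|))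
      with hs0def
    have hs0ne : s0.Nonempty := ⟨a / 2, Finset.mem_insert_self _ _⟩
    set ε := s0.min' hs0ne with hεdef
    have hεmem := s0.min'_mem hs0ne
    have hεpos : 0 < ε := by
      have hall : ∀ y ∈ s0, 0 < y := by
        intro y hy
        rcases Finset.mem_insert.mp hy with hcase | hcase
        · rw [hcase]; linarith
        · rcases Finset.mem_image.mp hcase with ⟨l, hl, rfl⟩
          have hl2 := (Finset.mem_filter.mp hl).2
          have hle := hetale l
          rcases lt_or_eq_of_le hle with h' | h'
          · linarith
          · exact absurd h' hl2
      exact hall ε hεmem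
    have hεlb : ∀ l, |⟪φ l, η⟫_ℝ| ≠ κ l → ε ≤ κ l - |⟪φ l, η⟫_ℝ| := by
      intro l hl
      by_cases hlF : l ∈ Ff
      · exact s0.min'_le _ (Finset.mem_insert_of_mem
          (Finset.mem_image_of_mem _ (Finset.mem_filter.mpr ⟨hlF, hl⟩)))
      · have hsmall : |⟪φ l, η⟫_ℝ| < a / 2 := by
          by_contra hcon
          exact hlF (by
            rw [hFfdef, Set.Finite.mem_toFinset]
            exact le_of_not_gt hcon)
        have hε2 : ε ≤ a / 2 := s0.min'_le _ (Finset.mem_insert_self _ _)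
        have := hκ l
        linarith
    have hbdd : BddBelow ((fun l => κ l - |⟪φ l, η⟫_ℝ|) ''
        {l : Λ | |⟪φ l, η⟫_ℝ| ≠ κ l}) := by
      refine ⟨0, fun y hy => ?_⟩
      rcases hy with ⟨l, hl, rfl⟩
      have := hetale l
      simp only
      linarith
    have hmlb : ε ≤ m := by
      rw [hmdef]
      exact le_csInf (hOne.image _) (by
        rintro y ⟨l, hl, rfl⟩
        exact hεlb l hl)
    have hm0 : 0 < m := lt_of_lt_of_le hεpos hmlb
    have hmle : ∀ l, |⟪φ l, η⟫_ℝ| ≠ κ l → m ≤ κ l - |⟪φ l, η⟫_ℝ| := by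
      intro l hl
      rw [hmdef]
      exact csInf_le hbdd ⟨l, hl, rfl⟩
    have hmS : m * S ≤ DN := hSDN m hm0.le hmle
    have hDN : DN ≤ δ * (1 + C * n) ^ 2 / (2 * C) := le_trans hDNle hDTbound
    have hSle : S ≤ δ * (1 + C * n) ^ 2 / (2 * C) / m := by
      rw [le_div_iff₀ hm0]
      calc S * m = m * S := mul_comm _ _
      _ ≤ DN := hmS
      _ ≤ _ := hDN
    calc ‖hh - hs‖ ≤ 2 * K * (1 + C * n) * δ + (1 + K * ‖A‖) * S := hfinal
    _ ≤ 2 * K * (1 + C * n) * δ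
        + (1 + K * ‖A‖) * (δ * (1 + C * n) ^ 2 / (2 * C) / m) :=
        add_le_add le_rfl (mul_le_mul_of_nonneg_left hSle h1KA)
    _ = (2 * K * (1 + C * n) + (1 + K * ‖A‖) / m * ((1 + C * n) ^ 2 / (2 * C))) * δ := by
        field_simp
  · have hOe : {l : Λ | |⟪φ l, η⟫_ℝ| ≠ κ l} = ∅ := Set.not_nonempty_iff_eq_empty.mp hOne
    have hmzero : m = 0 := by
      rw [hmdef, hOe, Set.image_empty, Real.sInf_empty]
    have hSzero : S = 0 := by
      have hx0 : xfun = fun _ => 0 := by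
        funext l
        have hcond : |⟪φ l, η⟫_ℝ| = κ l := by
          by_contra hc'
          exact (Set.eq_empty_iff_forall_notMem.mp hOe l) hc'
        simp only [hxfundef, if_pos hcond]
      rw [hSdef, hx0, tsum_zero]
    calc ‖hh - hs‖ ≤ 2 * K * (1 + C * n) * δ + (1 + K * ‖A‖) * S := hfinal
    _ = (2 * K * (1 + C * n) + (1 + K * ‖A‖) / m * ((1 + C * n) ^ 2 / (2 * C))) * δ := by
        rw [hSzero, hmzero, div_zero]
        ring
end
end
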